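/- Let P → X be a principal U(1)-bundle over a compact Kähler manifold X and A a connection on P. If there exists an equivariant map φ : P → ℂ, not identically zero, with iΛF_A − (i/2)|φ|² + iτ = 0, then τ > (2π/Vol(X))·deg_ω(P), where deg_ω(P) = (1/2π)∫_X iΛF_A dvol. -/

import Mathlib

open MeasureTheory Real

/-- Necessary direction of Bradlow's existence theorem for `τ`-vortices.
`X` is a compact Kähler manifold, abstracted as a compact topological space
with its (finite, positive-on-opens) volume measure.  The real function `c`
stands for `iΛF_A`, so that the real form of the moment map equation
`iΛF_A − (i/2)|φ|² + iτ = 0` reads `τ = c + |φ|²/2`, and the degree is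
`deg_ω(P) = (1/2π) ∫_X iΛF_A dvol`.  If an equivariant `φ`, not identically
zero (descending to a continuous section), satisfies the equation, then
`τ > (2π/Vol(X))·deg_ω(P)`. -/
theorem bradlow_necessary_condition
    {X : Type*} [MeasurableSpace X] [TopologicalSpace X] [BorelSpace X]
    [CompactSpace X]
    (μ : Measure X) [IsFiniteMeasure μ] [μ.IsOpenPosMeasure]
    (hVol : 0 < (μ Set.univ).toReal)
    (c : X → ℝ)                        -- the function iΛF_A
    (hc_int : Integrable c μ)
    (φ : X → ℂ)                        -- the section φ (descended to X)
    (hφ_cont : Continuous φ)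
    (hφ_ne : ∃ x, φ x ≠ 0)             -- φ is not identically zero
    (τ : ℝ)
    (heq : ∀ x, τ - c x - ‖φ x‖ ^ 2 / 2 = 0)  -- real form of iΛF_A − (i/2)|φ|² + iτ = 0
    :
    τ > (2 * Real.pi / (μ Set.univ).toReal)
        * ((1 / (2 * Real.pi)) * ∫ x, c x ∂μ) := by
  set g : X → ℝ := fun x => ‖φ x‖ ^ 2 / 2 with hg
  have hg_cont : Continuous g := by continuity
  have hg_int : Integrable g μ := hg_cont.integrable_of_hasCompactSupport
    (HasCompactSupport.of_compactSpace g) |>.mono_measure le_rfl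
  have hg_nonneg : 0 ≤ g := fun x => by positivity
  have hg_pos : 0 < ∫ x, g x ∂μ := by
    rw [integral_pos_iff_support_of_nonneg hg_nonneg hg_int]
    obtain ⟨x₀, hx₀⟩ := hφ_ne
    have hopen : IsOpen (Function.support g) := by
      have : Function.support g = {x | φ x ≠ 0} := by
        ext x
        simp [hg, Function.mem_support, norm_eq_zero, sub_eq_zero]
      rw [this]
      exact isOpen_ne_fun hφ_cont continuous_const
    exact hopen.measure_pos μ ⟨x₀, by simp [hg, Function.mem_support, hx₀]⟩
  have hceq : ∀ x, c x = τ - g x := fun x => by have := heq x; simp only [hg]; linarith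
  have hint : ∫ x, c x ∂μ = τ * (μ Set.univ).toReal - ∫ x, g x ∂μ := by
    calc ∫ x, c x ∂μ = ∫ x, (τ - g x) ∂μ := by
          exact integral_congr_ae (Filter.Eventually.of_forall hceq)
      _ = τ * (μ Set.univ).toReal - ∫ x, g x ∂μ := by
          rw [integral_sub (integrable_const τ) hg_int, integral_const, smul_eq_mul, mul_comm]; rfl
  have hπ : (2 * Real.pi) ≠ 0 := by positivity
  have key : (2 * Real.pi / (μ Set.univ).toReal) * ((1 / (2 * Real.pi)) * ∫ x, c x ∂μ)
      = (∫ x, c x ∂μ) / (μ Set.univ).toReal := by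
    field_simp
  rw [key, hint]
  rw [gt_iff_lt, div_lt_iff₀ hVol]
  nlinarith [hg_pos]
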